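/- Let p be prime and A ⊆ Z/pZ with |A| = δp > 0. If A is α-uniform with α < δ², then A is not sum-free, i.e., there exist x, y, z ∈ A with x + y = z. -/

import Mathlib

open Finset Complex Real

theorem stmt_7 (p : ℕ) (hp : Nat.Prime p) (A : Finset (ZMod p))
    (hA : A.Nonempty)
    (δ α : ℝ) (hδ : δ = (A.card : ℝ) / p) (hα : 0 ≤ α)
    (huniform : ∀ t : ZMod p, t ≠ 0 →
      ‖∑ x ∈ A, Complex.exp (-2 * Real.pi * Complex.I * (t.val * x.val) / p)‖
        ≤ α * p)
    (hαδ : α < δ ^ 2) :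
    ∃ x ∈ A, ∃ y ∈ A, ∃ z ∈ A, x + y = z := by
  by_contra hcon
  push_neg at hcon
  haveI : NeZero p := ⟨hp.ne_zero⟩
  set e : AddChar (ZMod p) ℂ := ZMod.stdAddChar with he
  set F : ZMod p → ℂ := fun t => ∑ x ∈ A, e (t * x) with hF
  have hp0 : (0 : ℝ) < p := by exact_mod_cast hp.pos
  have hn0 : (0 : ℝ) < A.card := by exact_mod_cast hA.card_pos
  -- exponential rewrite
  have hexp : ∀ s x : ZMod p,
      Complex.exp (-2 * Real.pi * Complex.I * (s.val * x.val) / p) = e (-(s * x)) := by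
    intro s x
    have h1 : (-(s * x)) = (((-(s.val * x.val : ℤ)) : ℤ) : ZMod p) := by
      push_cast
      rw [ZMod.natCast_val, ZMod.natCast_val, ZMod.cast_id, ZMod.cast_id]
    rw [h1, he, ZMod.stdAddChar_coe]
    congr 1
    push_cast
    ring
  -- orthogonality
  have horth : ∀ w : ZMod p, ∑ t : ZMod p, e (t * w) = if w = 0 then (p : ℂ) else 0 := by
    intro w
    split_ifs with h
    · simp [h, Finset.card_univ, ZMod.card]
    · have := AddChar.sum_eq_zero_of_ne_one ((ZMod.isPrimitive_stdAddChar p) h)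
      rw [← this]
      exact Finset.sum_congr rfl fun t _ => by
        rw [AddChar.mulShift_apply, mul_comm]
  -- conjugation
  have hconj : ∀ u : ZMod p, (starRingEnd ℂ) (e u) = e (-u) := by
    intro u
    rw [he, ZMod.stdAddChar_apply, ZMod.stdAddChar_apply, ← Circle.coe_inv_eq_conj,
      AddChar.map_neg_eq_inv]
  -- uniformity bound on F
  have hFbound : ∀ t : ZMod p, t ≠ 0 → ‖F t‖ ≤ α * p := by
    intro t ht
    have hnt : (-t) ≠ 0 := neg_ne_zero.mpr ht
    have hu := huniform (-t) hnt
    have hrw : ∑ x ∈ A, Complex.exp (-2 * Real.pi * Complex.I * ((-t).val * x.val) / p)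
        = F t := by
      simp only [hF]
      refine Finset.sum_congr rfl fun x _ => ?_
      rw [hexp (-t) x]
      congr 1
      ring
    rwa [hrw] at hu
  have hF0 : F 0 = (A.card : ℂ) := by
    simp [hF]
  -- pointwise |F t|^2
  have habs : ∀ t : ZMod p, ((‖F t‖ ^ 2 : ℝ) : ℂ)
      = F t * (starRingEnd ℂ) (F t) := by
    intro t
    rw [Complex.sq_norm, Complex.mul_conj]
  -- Parseval
  have hpars : ∑ t : ZMod p, (‖F t‖) ^ 2 = (p : ℝ) * A.card := by
    have hC : ∑ t : ZMod p, F t * (starRingEnd ℂ) (F t) = (p : ℂ) * A.card := by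
      have step : ∀ t : ZMod p, F t * (starRingEnd ℂ) (F t)
          = ∑ x ∈ A, ∑ y ∈ A, e (t * (x - y)) := by
        intro t
        simp only [hF]
        rw [map_sum, Finset.sum_mul_sum]
        refine Finset.sum_congr rfl fun x _ => Finset.sum_congr rfl fun y _ => ?_
        rw [hconj, ← AddChar.map_add_eq_mul]
        congr 1
        ring
      rw [Finset.sum_congr rfl fun t _ => step t]
      rw [Finset.sum_comm]
      have hin : ∀ x ∈ A, ∑ t : ZMod p, ∑ y ∈ A, e (t * (x - y)) = (p : ℂ) := by
        intro x hx
        rw [Finset.sum_comm]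
        rw [Finset.sum_congr rfl fun y (_ : y ∈ A) => horth (x - y)]
        have hsub : ∀ y : ZMod p, x - y = 0 ↔ y = x := by
          intro y; rw [sub_eq_zero]; exact eq_comm
        simp only [hsub]
        rw [Finset.sum_ite_eq' A x (fun _ => (p : ℂ))]
        simp [hx]
      rw [Finset.sum_congr rfl hin, Finset.sum_const, nsmul_eq_mul]
      ring
    have hcast : ((∑ t : ZMod p, (‖F t‖) ^ 2 : ℝ) : ℂ)
        = ((p : ℝ) * (A.card : ℝ) : ℂ) := by
      rw [Complex.ofReal_sum, Finset.sum_congr rfl fun t _ => habs t, hC]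
      push_cast
      ring
    exact_mod_cast hcast
  -- triple product of sums
  have mul3 : ∀ f g h : ZMod p → ℂ,
      (∑ x ∈ A, f x) * (∑ y ∈ A, g y) * (∑ z ∈ A, h z)
        = ∑ x ∈ A, ∑ y ∈ A, ∑ z ∈ A, f x * g y * h z := by
    intro f g h
    rw [Finset.sum_mul_sum, Finset.sum_mul_sum]
    simp only [Finset.sum_mul]
    exact Finset.sum_congr rfl fun x _ => Finset.sum_comm
  -- main identity
  have hmain : ∑ t : ZMod p, F t * F t * F (-t) = 0 := by
    have expand : ∀ t : ZMod p, F t * F t * F (-t)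
        = ∑ x ∈ A, ∑ y ∈ A, ∑ z ∈ A, e (t * (x + y - z)) := by
      intro t
      simp only [hF]
      rw [mul3]
      refine Finset.sum_congr rfl fun x _ => Finset.sum_congr rfl fun y _ =>
        Finset.sum_congr rfl fun z _ => ?_
      rw [← AddChar.map_add_eq_mul, ← AddChar.map_add_eq_mul]
      congr 1
      ring
    rw [Finset.sum_congr rfl fun t _ => expand t]
    rw [Finset.sum_comm]
    refine Finset.sum_eq_zero fun x hx => ?_
    rw [Finset.sum_comm]
    refine Finset.sum_eq_zero fun y hy => ?_
    rw [Finset.sum_comm]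
    refine Finset.sum_eq_zero fun z hz => ?_
    rw [horth (x + y - z), if_neg]
    exact sub_ne_zero.mpr (hcon x hx y hy z hz)
  -- split off the t = 0 term
  have h00 : F 0 * F 0 * F (-0) = (A.card : ℂ) ^ 3 := by
    rw [neg_zero, hF0]; ring
  have hsplit : (A.card : ℂ) ^ 3
      = -∑ t ∈ Finset.univ.erase (0 : ZMod p), F t * F t * F (-t) := by
    have hadd := Finset.add_sum_erase Finset.univ (fun t : ZMod p => F t * F t * F (-t))
      (Finset.mem_univ (0 : ZMod p))
    rw [eq_neg_iff_add_eq_zero, ← h00, hadd]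
    exact hmain
  -- bound
  have hbound : (A.card : ℝ) ^ 3 ≤ α * p * ((p : ℝ) * A.card) := by
    have h1 : (A.card : ℝ) ^ 3
        = ‖∑ t ∈ Finset.univ.erase (0 : ZMod p), F t * F t * F (-t)‖ := by
      rw [← norm_neg, ← hsplit, norm_pow, Complex.norm_natCast]
    have h2 : ‖∑ t ∈ Finset.univ.erase (0 : ZMod p), F t * F t * F (-t)‖
        ≤ ∑ t ∈ Finset.univ.erase (0 : ZMod p),
            (‖F t‖) ^ 2 * (α * p) := by
      refine le_trans (norm_sum_le _ _) (Finset.sum_le_sum fun t ht => ?_)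
      have ht0 : t ≠ 0 := Finset.ne_of_mem_erase ht
      rw [norm_mul, norm_mul]
      have hb : ‖F (-t)‖ ≤ α * p := hFbound (-t) (neg_ne_zero.mpr ht0)
      calc ‖F t‖ * ‖F t‖ * ‖F (-t)‖
          ≤ ‖F t‖ * ‖F t‖ * (α * p) :=
            mul_le_mul_of_nonneg_left hb (by positivity)
        _ = (‖F t‖) ^ 2 * (α * p) := by ring
    have h3 : ∑ t ∈ Finset.univ.erase (0 : ZMod p), (‖F t‖) ^ 2 * (α * p)
        ≤ (∑ t : ZMod p, (‖F t‖) ^ 2) * (α * p) := by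
      rw [← Finset.sum_mul]
      refine mul_le_mul_of_nonneg_right ?_ (by positivity)
      exact Finset.sum_le_sum_of_subset_of_nonneg (Finset.erase_subset _ _)
        (fun _ _ _ => by positivity)
    rw [hpars] at h3
    calc (A.card : ℝ) ^ 3 ≤ (p : ℝ) * A.card * (α * p) := h1 ▸ le_trans h2 h3
      _ = α * p * ((p : ℝ) * A.card) := by ring
  -- final contradiction
  have hfin : α * p * ((p : ℝ) * A.card) < (A.card : ℝ) ^ 3 := by
    have hδ2 : δ ^ 2 * (p : ℝ) ^ 2 = (A.card : ℝ) ^ 2 := by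
      rw [hδ]; field_simp
    have h4 : α * (p : ℝ) ^ 2 < (A.card : ℝ) ^ 2 := by
      rw [← hδ2]; exact mul_lt_mul_of_pos_right hαδ (by positivity)
    have h5 := mul_lt_mul_of_pos_right h4 hn0
    calc α * p * ((p : ℝ) * A.card) = α * (p : ℝ) ^ 2 * A.card := by ring
      _ < (A.card : ℝ) ^ 2 * A.card := h5
      _ = (A.card : ℝ) ^ 3 := by ring
  linarith
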